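/- Let (P,≤,',0,1) be a finite strongly modular consistent poset. Define set-valued operators on P by x⊙y := {0} if x ≤ y' and x⊙y := Max L(U(x,y'),y) otherwise, and x→y := {1} if x ≤ y and x→y := Min U(x',L(x,y)) otherwise, where Max and Min denote the sets of maximal and minimal elements. Then for all x,y,z ∈ P: (i) x⊙1 = 1⊙x = {x}; (ii) every element of x⊙y is ≤ z if and only if x ≤ every element of y→z (adjointness). -/

import Mathlib

/-- `f` is an antitone involution on the poset `P`. -/
def AntitoneInvolution {P : Type*} [PartialOrder P] (f : P → P) : Prop :=
  (∀ x, f (f x) = x) ∧ ∀ x y : P, x ≤ y → f y ≤ f x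

/-- A consistent poset: a bounded poset with an antitone involution `f` satisfying
(8) `L(x,x') = L(y,y')` for all `x,y ∉ {0,1}` and (9) `L(x,y) ≠ {0}` for `x,y ≠ 0`. -/
def ConsistentPoset {P : Type*} [PartialOrder P] [BoundedOrder P] (f : P → P) : Prop :=
  AntitoneInvolution f ∧
  (∀ x y : P, x ≠ ⊥ → x ≠ ⊤ → y ≠ ⊥ → y ≠ ⊤ →
    lowerBounds {x, f x} = lowerBounds {y, f y}) ∧
  (∀ x y : P, x ≠ ⊥ → y ≠ ⊥ → lowerBounds {x, y} ≠ ({⊥} : Set P))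

/-- A poset is strongly modular if it satisfies the identities
(2) `L(U(x,y),U(x,z)) = L(U(x, L(y,U(x,z))))` and
(3) `L(U(L(x,z),y),z) = L(U(L(x,z), L(y,z)))`. -/
def StronglyModularPoset (P : Type*) [PartialOrder P] : Prop :=
  (∀ x y z : P,
    lowerBounds (upperBounds {x, y} ∪ upperBounds {x, z}) =
      lowerBounds (upperBounds ({x} ∪ lowerBounds ({y} ∪ upperBounds {x, z})))) ∧
  (∀ x y z : P,
    lowerBounds (upperBounds (lowerBounds {x, z} ∪ {y}) ∪ {z}) =
      lowerBounds (upperBounds (lowerBounds {x, z} ∪ lowerBounds {y, z})))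

/-- The set of maximal elements of `s`. -/
def maxSet {P : Type*} [PartialOrder P] (s : Set P) : Set P := {x | Maximal (· ∈ s) x}

/-- The set of minimal elements of `s`. -/
def minSet {P : Type*} [PartialOrder P] (s : Set P) : Set P := {x | Minimal (· ∈ s) x}

open Classical in
/-- The operator `x ⊙ y` of (14). -/
noncomputable def odot {P : Type*} [PartialOrder P] [BoundedOrder P] (f : P → P)
    (x y : P) : Set P :=
  if x ≤ f y then {⊥} else maxSet (lowerBounds (upperBounds {x, f y} ∪ {y}))

open Classical in
/-- The operator `x → y` of (14). -/
noncomputable def arrow {P : Type*} [PartialOrder P] [BoundedOrder P] (f : P → P)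
    (x y : P) : Set P :=
  if x ≤ y then {⊤} else minSet (upperBounds ({f x} ∪ lowerBounds {x, y}))

set_option linter.unusedSectionVars false

section Helpers

variable {P : Type*} [PartialOrder P] [BoundedOrder P] {f : P → P}

lemma ai_bot (h : AntitoneInvolution f) : f ⊥ = ⊤ := by
  have h2 := h.2 ⊥ (f ⊤) bot_le
  rw [h.1] at h2
  exact top_unique h2

lemma ai_top (h : AntitoneInvolution f) : f ⊤ = ⊥ := by
  have h2 := congrArg f (ai_bot h)
  rw [h.1] at h2
  exact h2.symm

lemma mem_ub_pair {a p q : P} : a ∈ upperBounds ({p, q} : Set P) ↔ p ≤ a ∧ q ≤ a := by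
  simp [upperBounds]

lemma mem_lb_pair {a p q : P} : a ∈ lowerBounds ({p, q} : Set P) ↔ a ≤ p ∧ a ≤ q := by
  simp [lowerBounds]

lemma maxSet_Iic (x : P) : maxSet (Set.Iic x) = {x} := by
  ext w
  simp only [maxSet, Set.mem_setOf_eq, Set.mem_singleton_iff]
  constructor
  · rintro ⟨hw, hmax⟩
    exact le_antisymm hw (hmax (le_refl x) hw)
  · rintro rfl
    exact ⟨le_rfl, fun y hy _ => hy⟩

lemma forall_maxSet_le [Finite P] {s : Set P} {z : P} :
    (∀ w ∈ maxSet s, w ≤ z) ↔ ∀ w ∈ s, w ≤ z := by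
  constructor
  · intro h w hw
    obtain ⟨b, hwb, hb⟩ := Finite.exists_le_maximal hw
    exact hwb.trans (h b hb)
  · exact fun h w hw => h w hw.1

lemma forall_minSet_ge [Finite P] {s : Set P} {x : P} :
    (∀ w ∈ minSet s, x ≤ w) ↔ ∀ w ∈ s, x ≤ w := by
  constructor
  · intro h w hw
    obtain ⟨b, hbw, hb⟩ := Finite.exists_le_minimal hw
    exact (h b hb).trans hbw
  · exact fun h w hw => h w hw.1

end Helpers

theorem stmt_12 {P : Type*} [PartialOrder P] [BoundedOrder P] [Finite P] (f : P → P)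
    (hcons : ConsistentPoset f) (hsmod : StronglyModularPoset P) :
    ∀ x y z : P,
      odot f x ⊤ = {x} ∧ odot f ⊤ x = {x} ∧
      ((∀ w ∈ odot f x y, w ≤ z) ↔ (∀ w ∈ arrow f y z, x ≤ w)) := by
  obtain ⟨hai, h8, h9⟩ := hcons
  obtain ⟨hm2, hm3⟩ := hsmod
  have hften : ∀ a b : P, a ≤ b → f b ≤ f a := hai.2
  have hinv : ∀ a : P, f (f a) = a := hai.1
  intro x y z
  refine ⟨?_, ?_, ?_⟩
  · -- odot f x ⊤ = {x}
    by_cases hx : x ≤ f ⊤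
    · have hxb : x = ⊥ := by
        rw [ai_top hai] at hx
        exact le_bot_iff.mp hx
      unfold odot
      rw [if_pos hx, hxb]
    · unfold odot
      rw [if_neg hx]
      have hS : lowerBounds (upperBounds {x, f ⊤} ∪ {⊤}) = Set.Iic x := by
        apply Set.Subset.antisymm
        · intro w hw
          exact hw (Set.mem_union_left _
            (mem_ub_pair.mpr ⟨le_rfl, (ai_top hai) ▸ bot_le⟩))
        · intro w hw
          rintro a (ha | ha)
          · exact le_trans hw (mem_ub_pair.mp ha).1
          · rw [Set.mem_singleton_iff] at ha; subst ha; exact le_top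
      rw [hS, maxSet_Iic]
  · -- odot f ⊤ x = {x}
    by_cases hx : (⊤ : P) ≤ f x
    · have hfx : f x = ⊤ := top_unique hx
      have hxbot : x = ⊥ := by
        have h1 := congrArg f hfx
        rwa [hinv, ai_top hai] at h1
      unfold odot
      rw [if_pos hx, hxbot]
    · unfold odot
      rw [if_neg hx]
      have hS : lowerBounds (upperBounds {⊤, f x} ∪ {x}) = Set.Iic x := by
        apply Set.Subset.antisymm
        · intro w hw
          exact hw (Set.mem_union_right _ rfl)
        · intro w hw
          rintro a (ha | ha)
          · exact le_trans (le_trans hw le_top) (mem_ub_pair.mp ha).1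
          · rw [Set.mem_singleton_iff] at ha; subst ha; exact hw
      rw [hS, maxSet_Iic]
  · -- adjointness
    by_cases hxy : x ≤ f y
    · unfold odot
      rw [if_pos hxy]
      constructor
      · intro _ w hw
        unfold arrow at hw
        split_ifs at hw with hyz
        · rw [Set.mem_singleton_iff] at hw; subst hw; exact le_top
        · exact hxy.trans (hw.1 (Set.mem_union_left _ rfl))
      · intro _ w hw
        rw [Set.mem_singleton_iff] at hw; subst hw; exact bot_le
    · by_cases hyz : y ≤ z
      · unfold arrow
        rw [if_pos hyz]
        constructor
        · intro _ w hw
          rw [Set.mem_singleton_iff] at hw; subst hw; exact le_top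
        · intro _ w hw
          unfold odot at hw
          rw [if_neg hxy] at hw
          exact (hw.1 (Set.mem_union_right _ rfl)).trans hyz
      · -- main case : ¬ x ≤ f y, ¬ y ≤ z
        unfold odot arrow
        rw [if_neg hxy, if_neg hyz]
        rw [forall_maxSet_le, forall_minSet_ge]
        have hx0 : x ≠ ⊥ := fun h => hxy (h ▸ bot_le)
        have hy0 : y ≠ ⊥ := fun h => hyz (h ▸ bot_le)
        constructor
        · -- C1 → C2
          intro hC1 u hu
          have hx1 : x ≠ ⊤ := by
            intro hxt
            apply hyz
            apply hC1 y
            rintro a (ha | ha)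
            · exact le_trans le_top (hxt ▸ (mem_ub_pair.mp ha).1)
            · rw [Set.mem_singleton_iff] at ha; subst ha; exact le_rfl
          have key : ∀ v, v ∈ upperBounds ({y, f y} : Set P) → x ≤ v := by
            intro v hv
            by_cases hy1 : y = ⊤
            · exact le_trans le_top (hy1 ▸ (mem_ub_pair.mp hv).1)
            · have h1 : f v ≤ y := by
                have h1' := hften (f y) v (mem_ub_pair.mp hv).2
                rwa [hinv] at h1'
              have h2 : f v ≤ f y := hften y v (mem_ub_pair.mp hv).1
              have hmem : f v ∈ lowerBounds ({y, f y} : Set P) := mem_lb_pair.mpr ⟨h1, h2⟩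
              rw [h8 y x hy0 hy1 hx0 hx1] at hmem
              have h3 : f v ≤ f x := (mem_lb_pair.mp hmem).2
              have h4 := hften (f v) (f x) h3
              rwa [hinv, hinv] at h4
          have hxlb : x ∈ lowerBounds
              (upperBounds ({f y, y} : Set P) ∪ upperBounds ({f y, x} : Set P)) := by
            rintro a (ha | ha)
            · rw [Set.pair_comm (f y) y] at ha
              exact key a ha
            · exact (mem_ub_pair.mp ha).2
          rw [hm2 (f y) y x] at hxlb
          apply hxlb
          rintro a (ha | ha)
          · rw [Set.mem_singleton_iff] at ha; subst ha
            exact hu (Set.mem_union_left _ rfl)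
          · apply hu
            right
            apply mem_lb_pair.mpr
            refine ⟨ha (Set.mem_union_left _ rfl), ?_⟩
            apply hC1
            rintro b (hb | hb)
            · rw [Set.pair_comm x (f y)] at hb
              exact ha (Set.mem_union_right _ hb)
            · rw [Set.mem_singleton_iff] at hb; subst hb
              exact ha (Set.mem_union_left _ rfl)
        · -- C2 → C1
          intro hC2 w hw
          have hz0 : z ≠ ⊥ := by
            intro hz
            apply hxy
            apply hC2 (f y)
            rintro a (ha | ha)
            · rw [Set.mem_singleton_iff] at ha; subst ha; exact le_rfl
            · subst hz
              exact le_trans (mem_lb_pair.mp ha).2 bot_le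
          have hz1 : z ≠ ⊤ := fun h => hyz (h ▸ le_top)
          by_cases hy1 : y = ⊤
          · have hxz : x ≤ z := by
              apply hC2 z
              rintro a (ha | ha)
              · rw [Set.mem_singleton_iff] at ha; subst ha
                rw [hy1, ai_top hai]; exact bot_le
              · exact (mem_lb_pair.mp ha).2
            have hwx : w ≤ x := hw (Set.mem_union_left _
              (mem_ub_pair.mpr ⟨le_rfl, by rw [hy1, ai_top hai]; exact bot_le⟩))
            exact hwx.trans hxz
          · have hwy : w ≤ y := hw (Set.mem_union_right _ rfl)
            have hsub : upperBounds ({f y} ∪ lowerBounds ({y, z} : Set P)) ⊆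
                upperBounds ({x, f y} : Set P) := by
              intro u hu
              exact mem_ub_pair.mpr ⟨hC2 u hu, hu (Set.mem_union_left _ rfl)⟩
            have hw2 : w ∈ lowerBounds
                (upperBounds (lowerBounds ({z, y} : Set P) ∪ {f y}) ∪ {y}) := by
              rintro a (ha | ha)
              · apply hw
                left
                apply hsub
                rw [Set.pair_comm y z, Set.union_comm ({f y} : Set P)]
                exact ha
              · rw [Set.mem_singleton_iff] at ha; subst ha; exact hwy
            rw [hm3 z (f y) y] at hw2
            apply hw2
            rintro a (ha | ha)
            · exact (mem_lb_pair.mp ha).1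
            · rw [Set.pair_comm (f y) y, h8 y z hy0 hy1 hz0 hz1] at ha
              exact (mem_lb_pair.mp ha).1
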